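/- Let S be a finite set of segments in the plane with congestion c, meaning for every point p and radius ρ > 0 the total length of the parts of segments of S inside q(p,ρ) is at most c·ρ. If every segment in a subset T ⊆ S has length at least αr and intersects the square q(p,r), then |T| ≤ ((1+α)/α)·c. -/

import Mathlib

open Real MeasureTheory

/-- The axis-parallel square (`L∞`-ball) centered at `p` of radius `ρ` (side length `2ρ`). -/
def square (p : EuclideanSpace ℝ (Fin 2)) (ρ : ℝ) : Set (EuclideanSpace ℝ (Fin 2)) :=
  {x | ∀ i, |x i - p i| ≤ ρ}

lemma coord_le_norm (v : EuclideanSpace ℝ (Fin 2)) (i : Fin 2) : |v i| ≤ ‖v‖ := by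
  rw [EuclideanSpace.norm_eq]
  calc |v i| = Real.sqrt (|v i|^2) := by rw [Real.sqrt_sq_eq_abs, abs_abs]
  _ ≤ _ := Real.sqrt_le_sqrt (Finset.single_le_sum (f := fun j => |v j|^2)
      (fun j _ => sq_nonneg _) (Finset.mem_univ i))

-- key lemma
lemma key (a b x p : EuclideanSpace ℝ (Fin 2)) (r α : ℝ) (hr : 0 < r) (hα : 0 < α)
    (hlong : α * r ≤ dist a b) (hx : x ∈ segment ℝ a b ∩ square p r) :
    ENNReal.ofReal (α * r) ≤ μH[1] (segment ℝ a b ∩ square p ((1+α)*r)) := by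
  obtain ⟨hxs, hxq⟩ := hx
  rw [segment_eq_image_lineMap] at hxs
  obtain ⟨t, ht, hxt⟩ := hxs
  set L := dist a b with hL
  have hL0 : 0 < L := lt_of_lt_of_le (by positivity) hlong
  set δ : ℝ := α * r / L with hδ
  have hδ0 : 0 < δ := by positivity
  have hδ1 : δ ≤ 1 := by rw [hδ, div_le_one hL0]; exact hlong
  set t₁ : ℝ := min t (1 - δ) with ht₁
  set t₂ : ℝ := t₁ + δ with ht₂
  have ht10 : 0 ≤ t₁ := le_min ht.1 (by linarith)
  have ht21 : t₂ ≤ 1 := by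
    have : t₁ ≤ 1 - δ := min_le_right _ _
    linarith
  have ht1t : t₁ ≤ t := min_le_left _ _
  have htt2 : t ≤ t₂ := by
    rcases le_total t (1 - δ) with h | h
    · have : t₁ = t := min_eq_left h
      simp [ht₂, this]; linarith
    · have : t₁ = 1 - δ := min_eq_right h
      rw [ht₂, this]; linarith [ht.2]
  set f := AffineMap.lineMap (k := ℝ) a b with hf
  have hdistf : ∀ u v : ℝ, dist (f u) (f v) = |u - v| * L := by
    intro u v
    have h : f u - f v = (u - v) • (b - a) := by
      simp only [hf, AffineMap.lineMap_apply, vsub_eq_sub, vadd_eq_add]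
      rw [sub_smul]; abel
    rw [dist_eq_norm, h, norm_smul, Real.norm_eq_abs, hL, dist_eq_norm, norm_sub_rev]
  -- the subsegment
  have hsub : segment ℝ (f t₁) (f t₂) ⊆ segment ℝ a b ∩ square p ((1+α)*r) := by
    intro y hy
    constructor
    · have h1 : f t₁ ∈ segment ℝ a b := by
        rw [segment_eq_image_lineMap]; exact ⟨t₁, ⟨ht10, by linarith⟩, rfl⟩
      have h2 : f t₂ ∈ segment ℝ a b := by
        rw [segment_eq_image_lineMap]; exact ⟨t₂, ⟨by linarith, ht21⟩, rfl⟩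
      exact (convex_segment a b).segment_subset h1 h2 hy
    · -- y is within αr of x
      have hyx : dist y x ≤ α * r := by
        have h1 : dist (f t₁) x ≤ α * r := by
          rw [← hxt, hdistf]
          have : |t₁ - t| ≤ δ := by rw [abs_le]; constructor <;> linarith
          calc |t₁ - t| * L ≤ δ * L := by nlinarith
          _ = α * r := by rw [hδ, div_mul_cancel₀ _ hL0.ne']
        have h2 : dist (f t₂) x ≤ α * r := by
          rw [← hxt, hdistf]
          have : |t₂ - t| ≤ δ := by rw [abs_le]; constructor <;> linarith
          calc |t₂ - t| * L ≤ δ * L := by nlinarith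
          _ = α * r := by rw [hδ, div_mul_cancel₀ _ hL0.ne']
        obtain ⟨u, v, hu, hv, huv, rfl⟩ := hy
        calc dist (u • f t₁ + v • f t₂) x
            = ‖u • (f t₁ - x) + v • (f t₂ - x)‖ := by
              rw [dist_eq_norm]; congr 1
              have hx' : u • x + v • x = x := by rw [← add_smul, huv, one_smul]
              conv_lhs => rw [← hx']
              rw [smul_sub, smul_sub]; abel
        _ ≤ u * ‖f t₁ - x‖ + v * ‖f t₂ - x‖ := by
              refine (norm_add_le _ _).trans ?_
              rw [norm_smul, norm_smul, Real.norm_eq_abs, Real.norm_eq_abs,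
                abs_of_nonneg hu, abs_of_nonneg hv]
        _ ≤ u * (α*r) + v * (α*r) := by
              gcongr <;> rw [← dist_eq_norm] <;> assumption
        _ = α * r := by rw [← add_mul, huv, one_mul]
      intro i
      calc |y i - p i| ≤ |y i - x i| + |x i - p i| := by
            have := abs_sub_le (y i) (x i) (p i)
            simpa using this
      _ ≤ dist y x + r := by
            gcongr
            · have := coord_le_norm (y - x) i
              simpa [dist_eq_norm] using this
            · exact hxq i
      _ ≤ α * r + r := by linarith
      _ = (1 + α) * r := by ring
  calc ENNReal.ofReal (α * r) = edist (f t₁) (f t₂) := by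
        rw [edist_dist, hdistf]
        congr 1
        rw [ht₂, show t₁ - (t₁ + δ) = -δ by ring, abs_neg, abs_of_pos hδ0, hδ]
        field_simp
  _ = μH[1] (segment ℝ (f t₁) (f t₂)) := (hausdorffMeasure_segment _ _).symm
  _ ≤ _ := measure_mono hsub

/-- If `S` has congestion at most `c` (for every center and radius `ρ > 0`, the total
length of `S` clipped to the square is at most `c·ρ`), and every segment of `T ⊆ S`
has length at least `α·r` and intersects `q(p,r)`, then `|T| ≤ ((1+α)/α)·c`. -/
theorem stmt_5 (S T : Finset (EuclideanSpace ℝ (Fin 2) × EuclideanSpace ℝ (Fin 2)))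
    (c : ℝ)
    (hc : ∀ (p' : EuclideanSpace ℝ (Fin 2)) (ρ : ℝ), 0 < ρ →
      ∑ s ∈ S, (μH[1] (segment ℝ s.1 s.2 ∩ square p' ρ)).toReal ≤ c * ρ)
    (p : EuclideanSpace ℝ (Fin 2)) (r α : ℝ) (hr : 0 < r) (hα : 0 < α)
    (hTS : T ⊆ S)
    (hlong : ∀ s ∈ T, α * r ≤ dist s.1 s.2)
    (hmeet : ∀ s ∈ T, (segment ℝ s.1 s.2 ∩ square p r).Nonempty) :
    (T.card : ℝ) ≤ (1 + α) / α * c := by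
  set R := (1 + α) * r with hR
  have hR0 : 0 < R := by positivity
  have hkey : ∀ s ∈ T, α * r ≤ (μH[1] (segment ℝ s.1 s.2 ∩ square p R)).toReal := by
    intro s hs
    obtain ⟨x, hx⟩ := hmeet s hs
    have h1 := key s.1 s.2 x p r α hr hα (hlong s hs) hx
    have hfin : μH[1] (segment ℝ s.1 s.2 ∩ square p R) ≠ ⊤ := by
      refine ne_top_of_le_ne_top ?_ (measure_mono Set.inter_subset_left)
      rw [hausdorffMeasure_segment]; exact edist_ne_top _ _
    exact (ENNReal.ofReal_le_iff_le_toReal hfin).mp h1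
  have h2 : (T.card : ℝ) * (α * r) ≤ c * R := by
    calc (T.card : ℝ) * (α * r) = ∑ _s ∈ T, α * r := by
          rw [Finset.sum_const, nsmul_eq_mul]
    _ ≤ ∑ s ∈ T, (μH[1] (segment ℝ s.1 s.2 ∩ square p R)).toReal :=
          Finset.sum_le_sum hkey
    _ ≤ ∑ s ∈ S, (μH[1] (segment ℝ s.1 s.2 ∩ square p R)).toReal :=
          Finset.sum_le_sum_of_subset_of_nonneg hTS
            (fun _ _ _ => ENNReal.toReal_nonneg)
    _ ≤ c * R := hc p R hR0
  rw [hR] at h2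
  rw [div_mul_eq_mul_div, le_div_iff₀ hα]
  nlinarith [h2, hr]
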